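/- Let V ⊂ R^n be a finite set of points on the unit sphere whose convex hull contains the ball B(ρ, 0) of radius ρ ≤ 1/4, and let τ : R^n → R^n be an invertible affine map with τ(E(A,a)) = B(1,0). If every point τ⁻¹(v/(n+σ)) for v ∈ V (σ ≥ 1) lies in a convex set Y ⊆ E(A,a), then E((1/β²)A, a) ⊆ Y ⊆ E(A,a) where β = (n+σ)/ρ; i.e., E(A,a) is a β-rounding of Y. -/

import Mathlib

open Matrix

/-- The ellipsoid `E(A,a) = {x : (x-a)ᵀ A⁻¹ (x-a) ≤ 1}`. -/
noncomputable def ell {n : ℕ} (A : Matrix (Fin n) (Fin n) ℝ) (a : Fin n → ℝ) :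
    Set (Fin n → ℝ) :=
  {x | (x - a) ⬝ᵥ (A⁻¹ *ᵥ (x - a)) ≤ 1}

/-- The positive semidefinite square root, as `Matrix.PosSemidef.sqrt` was defined in Mathlib
(December 2024); that definition has since been removed. -/
noncomputable def posSemidefSqrt {n : Type*} [Fintype n] [DecidableEq n]
    {A : Matrix n n ℝ} (hA : A.PosSemidef) : Matrix n n ℝ :=
  hA.1.eigenvectorUnitary.1 * diagonal ((↑) ∘ (Real.sqrt ∘ hA.1.eigenvalues)) *
    (star hA.1.eigenvectorUnitary : Matrix n n ℝ)

theorem stmt16 {n : ℕ} (A : Matrix (Fin n) (Fin n) ℝ) (hA : A.PosDef) (a : Fin n → ℝ)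
    (V : Set (Fin n → ℝ)) (hVfin : V.Finite)
    (hVsphere : ∀ v ∈ V, Real.sqrt (v ⬝ᵥ v) = 1)
    (ρ : ℝ) (hρ0 : 0 < ρ) (hρ : ρ ≤ 1 / 4)
    (hball : {x : Fin n → ℝ | Real.sqrt (x ⬝ᵥ x) ≤ ρ} ⊆ convexHull ℝ V)
    (σ : ℝ) (hσ : 1 ≤ σ)
    (Y : Set (Fin n → ℝ)) (hY : Convex ℝ Y) (hYE : Y ⊆ ell A a)
    (hpts : ∀ v ∈ V, a + posSemidefSqrt hA.posSemidef *ᵥ ((1 / (n + σ)) • v) ∈ Y) :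
    ell ((1 / ((n + σ) / ρ) ^ 2) • A) a ⊆ Y ∧ Y ⊆ ell A a := by
  refine ⟨?_, hYE⟩
  intro x hx
  set S := posSemidefSqrt hA.posSemidef with hSdef
  have hns : (0:ℝ) < (n:ℝ) + σ := by positivity
  have hc0 : (0:ℝ) < 1 / ((n + σ) / ρ) ^ 2 := by positivity
  set c : ℝ := 1 / (((n:ℝ) + σ) / ρ) ^ 2 with hcdef
  -- S is symmetric and invertible
  have hSsym : Sᵀ = S := by
    simp only [hSdef, posSemidefSqrt, Matrix.transpose_mul, Matrix.diagonal_transpose,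
      Unitary.coe_star, Matrix.star_eq_conjTranspose, Matrix.conjTranspose_eq_transpose_of_trivial,
      Matrix.transpose_transpose, Matrix.mul_assoc]
  have hSS : S * S = A := by
    have hU := Unitary.coe_star_mul_self hA.posSemidef.1.eigenvectorUnitary
    have hA' := hA.posSemidef.1.spectral_theorem
    rw [Unitary.conjStarAlgAut_apply] at hA'
    simp only [hSdef, posSemidefSqrt, Matrix.mul_assoc]
    rw [← Matrix.mul_assoc (star _ : Matrix (Fin n) (Fin n) ℝ), hU, Matrix.one_mul,
      ← Matrix.mul_assoc (diagonal _), diagonal_mul_diagonal]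
    conv_rhs => rw [hA', Matrix.mul_assoc]
    congr 3
    funext i
    simp [Real.mul_self_sqrt (hA.posSemidef.eigenvalues_nonneg i)]
  have hdetA : A.det ≠ 0 := ne_of_gt hA.det_pos
  have hdetS : IsUnit S.det := by
    refine isUnit_iff_ne_zero.mpr fun h => hdetA ?_
    rw [← hSS, Matrix.det_mul, h, mul_zero]
  -- set up y and w
  set d : Fin n → ℝ := x - a with hddef
  set y : Fin n → ℝ := S⁻¹ *ᵥ d with hydef
  have hSy : S *ᵥ y = d := by
    rw [hydef, Matrix.mulVec_mulVec, Matrix.mul_nonsing_inv S hdetS, Matrix.one_mulVec]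
  -- the quadratic form equals y ⬝ᵥ y
  have hAinv : A⁻¹ = S⁻¹ * S⁻¹ := by rw [← hSS, Matrix.mul_inv_rev]
  have hquad : d ⬝ᵥ (A⁻¹ *ᵥ d) = y ⬝ᵥ y := by
    have hSinvT : (S⁻¹)ᵀ = S⁻¹ := by rw [Matrix.transpose_nonsing_inv, hSsym]
    rw [hAinv, ← Matrix.mulVec_mulVec, Matrix.dotProduct_mulVec, ← Matrix.mulVec_transpose,
      hSinvT]
  -- extract the bound from hx
  have hxb : d ⬝ᵥ (A⁻¹ *ᵥ d) ≤ c := by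
    have hmem : d ⬝ᵥ ((c • A)⁻¹ *ᵥ d) ≤ 1 := hx
    have : Invertible c := invertibleOfNonzero (ne_of_gt hc0)
    rw [Matrix.inv_smul A c (isUnit_iff_ne_zero.mpr hdetA), invOf_eq_inv,
      Matrix.smul_mulVec, dotProduct_smul, smul_eq_mul] at hmem
    calc d ⬝ᵥ (A⁻¹ *ᵥ d) = c * (c⁻¹ * (d ⬝ᵥ (A⁻¹ *ᵥ d))) := by
          field_simp
      _ ≤ c * 1 := by
          exact mul_le_mul_of_nonneg_left hmem hc0.le
      _ = c := mul_one c
  have hyy : y ⬝ᵥ y ≤ c := hquad ▸ hxb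
  -- w lies in the ball of radius ρ
  set w : Fin n → ℝ := ((n:ℝ) + σ) • y with hwdef
  have hwball : Real.sqrt (w ⬝ᵥ w) ≤ ρ := by
    have hww : w ⬝ᵥ w = ((n:ℝ) + σ)^2 * (y ⬝ᵥ y) := by
      rw [hwdef, smul_dotProduct, dotProduct_smul, smul_eq_mul, smul_eq_mul, sq]
      ring
    have hle : w ⬝ᵥ w ≤ ρ ^ 2 := by
      rw [hww]
      have : ((n:ℝ) + σ)^2 * c = ρ ^ 2 := by
        rw [hcdef]; field_simp
      calc ((n:ℝ) + σ)^2 * (y ⬝ᵥ y) ≤ ((n:ℝ) + σ)^2 * c := by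
            exact mul_le_mul_of_nonneg_left hyy (by positivity)
        _ = ρ ^ 2 := this
    calc Real.sqrt (w ⬝ᵥ w) ≤ Real.sqrt (ρ ^ 2) := Real.sqrt_le_sqrt hle
      _ = ρ := by rw [Real.sqrt_sq hρ0.le]
  have hwV : w ∈ convexHull ℝ V := hball hwball
  -- affine map
  let L : (Fin n → ℝ) →ₗ[ℝ] (Fin n → ℝ) :=
    S.mulVecLin.comp ((1 / ((n:ℝ) + σ)) • LinearMap.id)
  let f : (Fin n → ℝ) →ᵃ[ℝ] (Fin n → ℝ) :=
    ((AffineEquiv.constVAdd ℝ (Fin n → ℝ) a).toAffineMap).comp L.toAffineMap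
  have hfapp : ∀ v, f v = a + S *ᵥ ((1 / ((n:ℝ) + σ)) • v) := by
    intro v
    simp [f, L, vadd_eq_add, Matrix.mulVec_smul]
  have hfx : f w = x := by
    rw [hfapp, hwdef, smul_smul, one_div, inv_mul_cancel₀ (ne_of_gt hns), one_smul, hSy,
      hddef]
    abel
  have himg : f '' (convexHull ℝ V) ⊆ Y := by
    rw [AffineMap.image_convexHull]
    refine convexHull_min ?_ hY
    rintro _ ⟨v, hv, rfl⟩
    rw [hfapp]
    exact hpts v hv
  exact himg ⟨w, hwV, hfx⟩
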